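/- (Intertwining property, Kato.) Let (H(s), P(s), τ) be an adiabatic process as in the context, with adiabatic Hamiltonian H_A(s) = λ(s)·I + (i/τ)[Ṗ(s), P(s)] and U_A the solution of i ∂_s U_A(s) = τ H_A(s) U_A(s), U_A(0) = I. Then for all s ∈ [0,1], U_A(s)·P(0) = P(s)·U_A(s). -/

import Mathlib

open Set ContinuousLinearMap

/-- The commutatorCLM `[A,B] = AB - BA` of two continuous linear operators. -/
def commutatorCLM {H : Type*} [NormedAddCommGroup H] [InnerProductSpace ℂ H]
    (A B : H →L[ℂ] H) : H →L[ℂ] H :=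
  A.comp B - B.comp A

section Aux

variable {V : Type*} [NormedAddCommGroup V] [NormedSpace ℂ V]

private lemma stmt8aux_QEQ (E Q : V →L[ℂ] V) (hQ : Q * Q = Q) (hE : Q * E + E * Q = E) :
    Q * E * Q = 0 := by
  have h1 : Q * E = Q * E + Q * E * Q := by
    nth_rewrite 1 [← hE]
    rw [mul_add, ← mul_assoc, hQ, mul_assoc, ← mul_assoc Q E Q]
  exact (left_eq_add.mp h1)

private lemma stmt8aux_key (c l : ℂ) (hc : c ≠ 0) (E Q : V →L[ℂ] V) (hQ : Q * Q = Q)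
    (hE : Q * E + E * Q = E) :
    (Complex.I * c) •
      (Q * (l • 1 + (Complex.I / c) • (E * Q - Q * E))
        - (l • 1 + (Complex.I / c) • (E * Q - Q * E)) * Q) = E := by
  have hQEQ : Q * E * Q = 0 := stmt8aux_QEQ E Q hQ hE
  have hcc : (Complex.I * c) * (Complex.I / c) = -1 := by
    field_simp
    exact Complex.I_sq
  simp only [mul_add, add_mul, mul_sub, sub_mul, mul_smul_comm, smul_mul_assoc,
    mul_one, one_mul, smul_sub, smul_smul]
  rw [← mul_assoc Q E Q] at *
  simp only [← mul_assoc, hQ, hQEQ]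
  rw [show E * Q * Q = E * Q by rw [mul_assoc, hQ]]
  simp only [smul_zero, zero_sub, sub_zero, smul_add, smul_neg, smul_smul, hcc,
    neg_smul, one_smul, neg_neg]
  rw [add_sub_add_left_eq_sub, sub_neg_eq_add, hE]

private lemma stmt8aux_derivEq (c l : ℂ) (hc : c ≠ 0) (E Q P0 U : V →L[ℂ] V)
    (hQ : Q * Q = Q) (hE : Q * E + E * Q = E) :
    ((-Complex.I * c) • ((l • 1 + (Complex.I / c) • (E * Q - Q * E)) * U)) * P0
      - (E * U + Q * ((-Complex.I * c) • ((l • 1 + (Complex.I / c) • (E * Q - Q * E)) * U)))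
    = ((-Complex.I * c) • (l • 1 + (Complex.I / c) • (E * Q - Q * E))) * (U * P0 - Q * U) := by
  set HA := l • (1 : V →L[ℂ] V) + (Complex.I / c) • (E * Q - Q * E) with hHA
  have hk : (Complex.I * c) • (Q * HA - HA * Q) = E := stmt8aux_key c l hc E Q hQ hE
  rw [← hk]
  simp only [neg_mul, neg_smul, mul_neg, neg_neg, smul_mul_assoc, mul_smul_comm,
    sub_mul, mul_sub, smul_sub, smul_smul, mul_assoc]
  abel

end Aux

theorem stmt8
    {H : Type*} [NormedAddCommGroup H] [InnerProductSpace ℂ H] [FiniteDimensional ℂ H]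
    (τ : ℝ) (hτ : 0 < τ)
    (Ham Ham' Ham'' : ℝ → H →L[ℂ] H)
    (hHamSA : ∀ s ∈ Icc (0:ℝ) 1, IsSelfAdjoint (Ham s))
    (hHamD : ∀ s ∈ Icc (0:ℝ) 1, HasDerivWithinAt Ham (Ham' s) (Icc 0 1) s)
    (hHamD2 : ∀ s ∈ Icc (0:ℝ) 1, HasDerivWithinAt Ham' (Ham'' s) (Icc 0 1) s)
    (hHamC2 : ContinuousOn Ham'' (Icc 0 1))
    (P P' : ℝ → H →L[ℂ] H)
    (hPD : ∀ s ∈ Icc (0:ℝ) 1, HasDerivWithinAt P (P' s) (Icc 0 1) s)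
    (hPC : ContinuousOn P' (Icc 0 1))
    (hPproj : ∀ s ∈ Icc (0:ℝ) 1, (P s).comp (P s) = P s)
    (hPsa : ∀ s ∈ Icc (0:ℝ) 1, IsSelfAdjoint (P s))
    (hPrank : ∀ s ∈ Icc (0:ℝ) 1, Module.finrank ℂ (LinearMap.range (P s : H →ₗ[ℂ] H)) = 1)
    (lam : ℝ → ℝ) (hlam : ContinuousOn lam (Icc 0 1))
    (heig : ∀ s ∈ Icc (0:ℝ) 1, (Ham s).comp (P s) = (lam s : ℂ) • P s)
    (UA : ℝ → H →L[ℂ] H) (hUA0 : UA 0 = 1)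
    (hUAD : ∀ s ∈ Icc (0:ℝ) 1,
      HasDerivWithinAt UA
        ((-Complex.I * (τ : ℂ)) •
          (((lam s : ℂ) • (1 : H →L[ℂ] H)
            + (Complex.I / (τ : ℂ)) • commutatorCLM (P' s) (P s)).comp (UA s)))
        (Icc 0 1) s) :
    ∀ s ∈ Icc (0:ℝ) 1, (UA s).comp (P 0) = (P s).comp (UA s) := by
  have hτc : (τ : ℂ) ≠ 0 := Complex.ofReal_ne_zero.mpr hτ.ne'
  -- the adiabatic Hamiltonian and the derivative of UA
  set HA : ℝ → H →L[ℂ] H := fun s =>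
    (lam s : ℂ) • (1 : H →L[ℂ] H) + (Complex.I / (τ : ℂ)) • commutatorCLM (P' s) (P s)
    with hHAdef
  set A : ℝ → H →L[ℂ] H := fun s => (-Complex.I * (τ : ℂ)) • (HA s * UA s) with hAdef
  -- the difference we show to be zero
  set D : ℝ → H →L[ℂ] H := fun s => UA s * P 0 - P s * UA s with hDdef
  have hUAD' : ∀ s ∈ Icc (0:ℝ) 1, HasDerivWithinAt UA (A s) (Icc 0 1) s := hUAD
  have hPproj' : ∀ s ∈ Icc (0:ℝ) 1, P s * P s = P s := hPproj
  -- the projection relations for the derivative P'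
  have hE : ∀ s ∈ Icc (0:ℝ) 1, P s * P' s + P' s * P s = P' s := by
    intro s hs
    have h1 : HasDerivWithinAt (fun y => P y * P y)
        (P' s * P s + P s * P' s) (Icc 0 1) s := (hPD s hs).mul (hPD s hs)
    have h2 : HasDerivWithinAt P (P' s * P s + P s * P' s) (Icc 0 1) s :=
      h1.congr (fun y hy => (hPproj' y hy).symm) (hPproj' s hs).symm
    have h3 := UniqueDiffWithinAt.eq_deriv (Icc (0:ℝ) 1)
      ((uniqueDiffOn_Icc (by norm_num : (0:ℝ) < 1)) s hs) h2 (hPD s hs)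
    rw [add_comm]; exact h3
  -- derivative of D
  have hDD : ∀ s ∈ Icc (0:ℝ) 1,
      HasDerivWithinAt D (((-Complex.I * (τ : ℂ)) • HA s) * D s) (Icc 0 1) s := by
    intro s hs
    have h1 : HasDerivWithinAt (fun y => UA y * P 0)
        (A s * P 0 + UA s * 0) (Icc 0 1) s :=
      (hUAD' s hs).mul (hasDerivWithinAt_const s _ (P 0))
    have h2 : HasDerivWithinAt (fun y => P y * UA y)
        (P' s * UA s + P s * A s) (Icc 0 1) s :=
      (hPD s hs).mul (hUAD' s hs)
    have h3 := h1.sub h2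
    have hkey := stmt8aux_derivEq (τ : ℂ) (lam s : ℂ) hτc (P' s) (P s) (P 0) (UA s)
      (hPproj' s hs) (hE s hs)
    have hcomm : commutatorCLM (P' s) (P s) = P' s * P s - P s * P' s := rfl
    have heq : A s * P 0 + UA s * 0 - (P' s * UA s + P s * A s)
        = ((-Complex.I * (τ : ℂ)) • HA s) * D s := by
      simp only [hAdef, hHAdef, hDdef, mul_zero, add_zero, hcomm]
      exact hkey
    rwa [heq] at h3
  -- continuity of D and of the coefficient
  have hDC : ContinuousOn D (Icc 0 1) := fun s hs => (hDD s hs).continuousWithinAt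
  have hPCont : ContinuousOn P (Icc 0 1) := fun s hs => (hPD s hs).continuousWithinAt
  have hHAC : ContinuousOn (fun s => ((-Complex.I * (τ : ℂ)) • HA s)) (Icc 0 1) := by
    refine (show ContinuousOn HA (Icc 0 1) from ?_).const_smul (-Complex.I * (τ : ℂ))
    apply ContinuousOn.add
    · exact ((Complex.continuous_ofReal.comp_continuousOn hlam).smul continuousOn_const)
    · exact ContinuousOn.const_smul ((hPC.mul hPCont).sub (hPCont.mul hPC)) (Complex.I / (τ : ℂ))
  obtain ⟨C, hC⟩ := isCompact_Icc.exists_bound_of_continuousOn hHAC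
  set K : ℝ := max C 0 with hK
  have hD0 : D 0 = 0 := by
    rw [hDdef]
    simp only [hUA0, one_mul, mul_one, sub_self]
  -- Grönwall
  have hgron := norm_le_gronwallBound_of_norm_deriv_right_le (f := D)
    (f' := fun s => ((-Complex.I * (τ : ℂ)) • HA s) * D s)
    (δ := 0) (K := K) (ε := 0) (a := 0) (b := 1) hDC
    (fun x hx => (hDD x (Ico_subset_Icc_self hx)).mono_of_mem_nhdsWithin
      (Icc_mem_nhdsGE_of_mem hx))
    (le_of_eq (by rw [hD0, norm_zero]))
    (by
      intro x hx
      have hx' : x ∈ Icc (0:ℝ) 1 := Ico_subset_Icc_self hx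
      calc ‖((-Complex.I * (τ : ℂ)) • HA x) * D x‖
          ≤ ‖(-Complex.I * (τ : ℂ)) • HA x‖ * ‖D x‖ := norm_mul_le _ _
        _ ≤ K * ‖D x‖ :=
            mul_le_mul_of_nonneg_right (le_trans (hC x hx') (le_max_left _ _))
              (norm_nonneg _)
        _ ≤ K * ‖D x‖ + 0 := le_of_eq (add_zero _).symm)
  intro s hs
  have hDs := hgron s hs
  rw [sub_zero, gronwallBound_ε0] at hDs
  simp only [mul_zero, zero_mul] at hDs
  have h0 : D s = 0 := norm_le_zero_iff.mp hDs
  have h1 : UA s * P 0 = P s * UA s := sub_eq_zero.mp h0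
  exact h1
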